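/- arXiv:2102.07667 — 3 statements merged into one kernel-verified Lean document; each statement's English description precedes it below -/
import Mathlib

section
/- Every treelike snark admits a 2-bisection, i.e., a partition of its vertex set into two colour classes of equal size such that every connected component of the subgraph induced by either colour class has at most 2 vertices. -/
/-- Vertices of a (fixed) Petersen 4-pole: the Petersen graph (Kneser graph on 2-subsets
of `Fin 5`) minus the two adjacent vertices `s = {0,1}` and `t = {2,3}`. -/
abbrev PoleVert : Type :=
  {p : Finset (Fin 5) // p.card = 2 ∧ p ≠ ({0,1} : Finset (Fin 5)) ∧ p ≠ ({2,3} : Finset (Fin 5))}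

/-- Endvertex of the first left dangling edge (a neighbour of `s = {0,1}` other than `t`). -/
def L1 : PoleVert := ⟨{2,4}, by decide⟩
/-- Endvertex of the second left dangling edge. -/
def L2 : PoleVert := ⟨{3,4}, by decide⟩
/-- Endvertex of the first right dangling edge (a neighbour of `t = {2,3}` other than `s`). -/
def R1 : PoleVert := ⟨{0,4}, by decide⟩
/-- Endvertex of the second right dangling edge. -/
def R2 : PoleVert := ⟨{1,4}, by decide⟩

/-- Vertices of a treelike snark built from a tree on `V` with `n` leaves: the tree
vertices, two pendant vertices `(i,0), (i,1)` for the `i`-th leaf, and a copy of the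
Petersen 4-pole for each of the `n` edges of the circuit `K`. -/
abbrev SnarkVert (V : Type*) (n : ℕ) : Type _ := V ⊕ ((ZMod n × Fin 2) ⊕ (ZMod n × PoleVert))

/-- The treelike snark built from a tree `T` whose leaves are `ℓ 0, ℓ 1, ..., ℓ (n-1)` in
the (clockwise) cyclic order of the circuit `K`.  For each leaf `ℓ i` we add the pendant
vertices `(i,0)` and `(i,1)`, and the edge `ℓ i — ℓ (i+1)` of `K` is replaced by the `i`-th
Petersen 4-pole, whose left dangling edges are joined to `(i,0)` and `(i,1)` and whose right
dangling edges are joined to `(i+1,0)` and `(i+1,1)`. -/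
def treelikeSnark {V : Type*} (n : ℕ) (T : SimpleGraph V) (ℓ : ZMod n → V) :
    SimpleGraph (SnarkVert V n) :=
  SimpleGraph.fromRel (fun a b =>
    -- edges of the tree T
    (∃ u v : V, T.Adj u v ∧ a = Sum.inl u ∧ b = Sum.inl v) ∨
    -- pendant edges at the leaves
    (∃ (i : ZMod n) (j : Fin 2), a = Sum.inl (ℓ i) ∧ b = Sum.inr (Sum.inl (i, j))) ∨
    -- internal edges of each Petersen 4-pole (Kneser adjacency)
    (∃ (i : ZMod n) (p q : PoleVert), Disjoint p.1 q.1 ∧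
        a = Sum.inr (Sum.inr (i, p)) ∧ b = Sum.inr (Sum.inr (i, q))) ∨
    -- the dangling edges of the i-th Petersen 4-pole, joined to the pendant vertices
    (∃ i : ZMod n,
      (a = Sum.inr (Sum.inl (i, 0)) ∧ b = Sum.inr (Sum.inr (i, L1))) ∨
      (a = Sum.inr (Sum.inl (i, 1)) ∧ b = Sum.inr (Sum.inr (i, L2))) ∨
      (a = Sum.inr (Sum.inl (i + 1, 0)) ∧ b = Sum.inr (Sum.inr (i, R1))) ∨
      (a = Sum.inr (Sum.inl (i + 1, 1)) ∧ b = Sum.inr (Sum.inr (i, R2)))))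

/-- A 2-bisection of `G`. -/
def TwoBisection {V : Type*} [Fintype V] (G : SimpleGraph V) (c : V → Fin 2) : Prop :=
  (Finset.univ.filter fun v => c v = 0).card = (Finset.univ.filter fun v => c v = 1).card ∧
  ∀ i : Fin 2, ∀ K : (G.induce {v | c v = i}).ConnectedComponent, K.supp.ncard ≤ 2

/-- The data `(n, T, ℓ)` defines a treelike snark: `T` is a tree all of whose vertices have
degree 1 or 3 (a cubic tree), `ℓ` is a bijective enumeration of its `n ≥ 3` leaves, and the
cyclic order `ℓ` of the leaves comes from a planar embedding of `T` (equivalently, for every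
edge of `T` the leaves lying on one side form a contiguous cyclic arc), so that `T` together
with the circuit `ℓ 0, ℓ 1, …, ℓ (n-1), ℓ 0` is a cubic Halin graph. -/
structure IsTreelikeStructure {V : Type*} (n : ℕ) (T : SimpleGraph V) (ℓ : ZMod n → V) :
    Prop where
  tree : T.IsTree
  cubic : ∀ v : V, (T.neighborSet v).ncard = 1 ∨ (T.neighborSet v).ncard = 3
  three_le : 3 ≤ n
  inj : Function.Injective ℓ
  isLeaf : ∀ i : ZMod n, (T.neighborSet (ℓ i)).ncard = 1
  surjOnLeaves : ∀ v : V, (T.neighborSet v).ncard = 1 → ∃ i : ZMod n, v = ℓ i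
  planar : ∀ u v : V, T.Adj u v →
    ∃ (a : ZMod n) (k : ℕ),
      {i : ZMod n | (T.deleteEdges {s(u, v)}).Reachable u (ℓ i)} =
        {x : ZMod n | ∃ m : ℕ, m < k ∧ x = a + (m : ZMod n)}


namespace TLS
open SimpleGraph Walk Finset


def chiFF (q : PoleVert) : Fin 2 :=
  if q.1 ∈ ({{0,2},{0,3},{0,4},{2,4}} : Finset (Finset (Fin 5))) then 0 else 1
def chiTT (q : PoleVert) : Fin 2 :=
  if q.1 ∈ ({{0,2},{0,3},{1,2},{1,3}} : Finset (Finset (Fin 5))) then 0 else 1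
def chiTF (q : PoleVert) : Fin 2 :=
  if q.1 ∈ ({{0,3},{0,4},{1,3},{3,4}} : Finset (Finset (Fin 5))) then 0 else 1

def swapPair (a b q : PoleVert) : PoleVert := if q = a then b else if q = b then a else q
def ppFF (q : PoleVert) : PoleVert :=
  swapPair ⟨{2,4}, by decide⟩ ⟨{0,3}, by decide⟩ (swapPair ⟨{3,4}, by decide⟩ ⟨{1,2}, by decide⟩ q)
def ppTT (q : PoleVert) : PoleVert :=
  swapPair ⟨{0,2}, by decide⟩ ⟨{1,3}, by decide⟩ (swapPair ⟨{0,3}, by decide⟩ ⟨{1,2}, by decide⟩ q)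
def ppTF (q : PoleVert) : PoleVert :=
  swapPair ⟨{0,4}, by decide⟩ ⟨{1,3}, by decide⟩ (swapPair ⟨{0,2}, by decide⟩ ⟨{1,4}, by decide⟩ q)

lemma chiFF_pair : ∀ p q : PoleVert, Disjoint p.1 q.1 → chiFF p = chiFF q →
    q = ppFF p ∧ p ≠ R1 := by decide
lemma chiTT_pair : ∀ p q : PoleVert, Disjoint p.1 q.1 → chiTT p = chiTT q → q = ppTT p := by decide
lemma chiTF_pair : ∀ p q : PoleVert, Disjoint p.1 q.1 → chiTF p = chiTF q →
    q = ppTF p ∧ p ≠ L2 := by decide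

variable {n : ℕ}

def pend (S : Finset (ZMod n)) (i : ZMod n) (j : Fin 2) : Fin 2 :=
  if j = 0 then (if i ∈ S then 0 else 1) else 0

def polc (S : Finset (ZMod n)) (i : ZMod n) (q : PoleVert) : Fin 2 :=
  if i ∈ S then (if i + 1 ∈ S then chiTT q else chiTF q) else chiFF q

variable {V : Type*}

def snarkCol (φ : V → Fin 2) (S : Finset (ZMod n)) : SnarkVert V n → Fin 2
  | Sum.inl v => φ v
  | Sum.inr (Sum.inl p) => pend S p.1 p.2
  | Sum.inr (Sum.inr p) => polc S p.1 p.2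

noncomputable def partner (ℓ : ZMod n → V) (φ : V → Fin 2) (S : Finset (ZMod n)) :
    SnarkVert V n → SnarkVert V n
  | Sum.inl v =>
      @dite _ (∃ i, ℓ i = v) (Classical.dec _)
        (fun hv => Sum.inr (Sum.inl (hv.choose, if φ v = 0 then 1 else 0)))
        (fun _ => Sum.inl v)
  | Sum.inr (Sum.inl p) =>
      if p.2 = 0 then
        (if p.1 ∈ S then Sum.inr (Sum.inr (p.1 - 1, R1)) else Sum.inl (ℓ p.1))
      else
        (if p.1 ∈ S then Sum.inr (Sum.inr (p.1, L2)) else Sum.inl (ℓ p.1))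
  | Sum.inr (Sum.inr p) =>
      if p.1 ∈ S then
        (if p.1 + 1 ∈ S then Sum.inr (Sum.inr (p.1, ppTT p.2))
         else if p.2 = L2 then Sum.inr (Sum.inl (p.1, 1)) else Sum.inr (Sum.inr (p.1, ppTF p.2)))
      else
        (if p.2 = R1 ∧ p.1 + 1 ∈ S then Sum.inr (Sum.inl (p.1 + 1, 0))
         else Sum.inr (Sum.inr (p.1, ppFF p.2)))

/-- Abstract component-size lemma. -/
lemma comp_le_two {W : Type*} (G : SimpleGraph W) (s : Set W)
    (key : ∀ x y z, x ∈ s → y ∈ s → z ∈ s → G.Adj x y → G.Adj x z → y = z)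
    (K : (G.induce s).ConnectedComponent) : K.supp.ncard ≤ 2 := by
  classical
  obtain ⟨v, rfl⟩ := K.exists_rep
  have walk_lem : ∀ (a b : s) (_ : (G.induce s).Walk a b), b = a ∨ (G.induce s).Adj a b := by
    intro a b W
    induction W with
    | nil => exact Or.inl rfl
    | @cons a u b h p ih =>
      rcases ih with rfl | hub
      · exact Or.inr h
      · have h1 : G.Adj u.1 a.1 := by simpa using h.symm
        have h2 : G.Adj u.1 b.1 := by simpa using hub
        exact Or.inl (Subtype.ext (key u.1 a.1 b.1 u.2 a.2 b.2 h1 h2)).symm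
  have hmem : ∀ w, w ∈ (SimpleGraph.connectedComponentMk (G.induce s) v).supp →
      w = v ∨ (G.induce s).Adj v w := by
    intro w hw
    rw [SimpleGraph.ConnectedComponent.mem_supp_iff, SimpleGraph.ConnectedComponent.eq] at hw
    obtain ⟨W⟩ := hw.symm
    exact walk_lem v w W |>.imp_left id
  by_cases hex : ∃ w ∈ (SimpleGraph.connectedComponentMk (G.induce s) v).supp, w ≠ v
  · obtain ⟨w0, hw0, hw0v⟩ := hex
    have hsub : (SimpleGraph.connectedComponentMk (G.induce s) v).supp ⊆ {v, w0} := by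
      intro w hw
      rcases hmem w hw with rfl | hadj
      · exact Set.mem_insert _ _
      · rcases hmem w0 hw0 with rfl | hadj0
        · exact absurd rfl hw0v
        · have : w = w0 := by
            have := key v.1 w.1 w0.1 v.2 w.2 w0.2 hadj hadj0
            exact Subtype.ext this
          exact this ▸ Set.mem_insert_iff.mpr (Or.inr rfl)
    calc (SimpleGraph.connectedComponentMk (G.induce s) v).supp.ncard
        ≤ ({v, w0} : Set s).ncard := Set.ncard_le_ncard hsub (Set.toFinite _)
      _ ≤ 2 := by
          rw [Set.ncard_pair (Ne.symm hw0v)]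
  · push_neg at hex
    have hsub : (SimpleGraph.connectedComponentMk (G.induce s) v).supp ⊆ {v} := by
      intro w hw; exact hex w hw
    calc (SimpleGraph.connectedComponentMk (G.induce s) v).supp.ncard
        ≤ ({v} : Set s).ncard := Set.ncard_le_ncard hsub (Set.toFinite _)
      _ ≤ 2 := by rw [Set.ncard_singleton]; omega



lemma concat_isPath {V : Type*} {G : SimpleGraph V} {u v w : V} (p : G.Walk u v)
    (hp : p.IsPath) (h : G.Adj v w) (hw : w ∉ p.support) : (p.concat h).IsPath := by
  rw [← isPath_reverse_iff, reverse_concat, cons_isPath_iff, isPath_reverse_iff]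
  refine ⟨hp, ?_⟩
  rw [support_reverse, List.mem_reverse]
  exact hw

open Fin.NatCast in
lemma exists_proper_coloring {V : Type*} {T : SimpleGraph V} (hT : T.IsTree) :
    ∃ φ : V → Fin 2, ∀ u v, T.Adj u v → φ u ≠ φ v := by
  classical
  obtain ⟨r⟩ := hT.isConnected.nonempty
  choose f hf hu using fun v => hT.existsUnique_path r v
  refine ⟨fun v => ((f v).length : Fin 2), ?_⟩
  have step : ∀ u v, T.Adj u v → v ∉ (f u).support → (f v).length = (f u).length + 1 := by
    intro u v huv hv
    have hq : ((f u).concat huv).IsPath := concat_isPath _ (hf u) huv hv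
    have := hu v _ hq
    rw [← this, length_concat]
  have key : ∀ u v, T.Adj u v → (f v).length = (f u).length + 1 ∨
      (f u).length = (f v).length + 1 := by
    intro u v huv
    by_cases hv : v ∈ (f u).support
    · right
      -- f v = takeUntil, f u = (takeUntil).concat
      have htk : ((f u).takeUntil v hv).IsPath := (hf u).takeUntil hv
      have hfv : (f u).takeUntil v hv = f v := hu v _ htk
      have hunotin : u ∉ ((f u).takeUntil v hv).support := by
        intro hmem
        have hnd : ((f u).takeUntil v hv).support.Nodup ∧ True := ⟨htk.support_nodup, trivial⟩
        have hspec := (f u).take_spec hv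
        have hnodup : (((f u).takeUntil v hv).append ((f u).dropUntil v hv)).support.Nodup := by
          rw [hspec]; exact (hf u).support_nodup
        rw [support_append] at hnodup
        have hdisj := List.disjoint_of_nodup_append hnodup
        have humem : u ∈ ((f u).dropUntil v hv).support.tail := by
          have h1 : u ∈ ((f u).dropUntil v hv).support := end_mem_support _
          rw [support_eq_cons] at h1
          rcases List.mem_cons.mp h1 with rfl | h2
          · exact absurd rfl huv.ne
          · exact h2
        exact hdisj hmem humem
      have hq : (((f u).takeUntil v hv).concat huv.symm).IsPath :=
        concat_isPath _ htk huv.symm hunotin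
      have := hu u _ hq
      rw [← this, length_concat, hfv]
    · left; exact step u v huv hv
  intro u v huv heq
  have hne : ∀ a : ℕ, ((a + 1 : ℕ) : Fin 2) ≠ (a : ℕ) := by
    intro a
    simp only [Nat.cast_add, Nat.cast_one]
    intro hcon
    have : ∀ x : Fin 2, x + 1 ≠ x := by decide
    exact this _ hcon
  simp only at heq
  rcases key u v huv with hlen | hlen
  · rw [hlen] at heq; exact hne _ heq.symm
  · rw [hlen] at heq; exact hne _ heq


lemma card_of_cubic_tree {V : Type*} [Fintype V] {T : SimpleGraph V} (n : ℕ) [NeZero n]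
    (ℓ : ZMod n → V) (hT : T.IsTree)
    (cubic : ∀ v : V, (T.neighborSet v).ncard = 1 ∨ (T.neighborSet v).ncard = 3)
    (hinj : Function.Injective ℓ)
    (isLeaf : ∀ i : ZMod n, (T.neighborSet (ℓ i)).ncard = 1)
    (surj : ∀ v : V, (T.neighborSet v).ncard = 1 → ∃ i : ZMod n, v = ℓ i) :
    Fintype.card V + 2 = 2 * n := by
  classical
  letI : DecidableRel T.Adj := Classical.decRel _
  have hdeg : ∀ v, T.degree v = (T.neighborSet v).ncard := by
    intro v
    rw [← card_neighborFinset_eq_degree, neighborFinset_def, Set.ncard_eq_toFinset_card']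
  set L : Finset V := univ.filter (fun v => T.degree v = 1) with hL
  have hLcard : L.card = n := by
    have himg : L = univ.image ℓ := by
      ext v
      simp only [hL, mem_filter, mem_univ, true_and, mem_image]
      constructor
      · intro hv
        obtain ⟨i, rfl⟩ := surj v (by rw [← hdeg]; exact hv)
        exact ⟨i, rfl⟩
      · rintro ⟨i, rfl⟩
        rw [hdeg]; exact isLeaf i
    rw [himg, card_image_of_injective _ hinj, card_univ, ZMod.card]
  have hsum : ∑ v, T.degree v = 2 * T.edgeFinset.card := T.sum_degrees_eq_twice_card_edges
  have hedge : T.edgeFinset.card + 1 = Fintype.card V := hT.card_edgeFinset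
  have hsplit : ∑ v, T.degree v
      = ∑ v ∈ L, T.degree v + ∑ v ∈ univ.filter (fun v => ¬ T.degree v = 1), T.degree v := by
    rw [hL, sum_filter_add_sum_filter_not]
  have h1 : ∑ v ∈ L, T.degree v = L.card := by
    rw [Finset.sum_congr rfl (fun v hv => (mem_filter.mp hv).2)]
    simp [hL]
  have hc : L.card + (univ.filter (fun v => ¬ T.degree v = 1)).card = Fintype.card V := by
    rw [hL]
    rw [Finset.card_filter_add_card_filter_not]
    exact card_univ
  have h2 : ∑ v ∈ univ.filter (fun v => ¬ T.degree v = 1), T.degree v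
      = 3 * (univ.filter (fun v => ¬ T.degree v = 1)).card := by
    rw [Finset.sum_congr rfl (fun v hv => ?_), Finset.sum_const, smul_eq_mul, mul_comm]
    have hv1 : ¬ T.degree v = 1 := (mem_filter.mp hv).2
    rcases cubic v with hcv | hcv
    · exact absurd (by rw [hdeg]; exact hcv) hv1
    · rw [hdeg]; exact hcv
  omega

open Finset

variable {n : ℕ} [NeZero n] {V : Type*} [Fintype V]

lemma pend_count0 (S : Finset (ZMod n)) :
    (univ.filter fun p : ZMod n × Fin 2 => pend S p.1 p.2 = 0).card = n + S.card := by
  classical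
  rw [← Fintype.card_subtype]
  rw [Fintype.card_congr (Equiv.subtypeProdEquivSigmaSubtype (fun i (j : Fin 2) => pend S i j = 0))]
  rw [Fintype.card_sigma]
  have : ∀ i : ZMod n, Fintype.card {j : Fin 2 // pend S i j = 0} = if i ∈ S then 2 else 1 := by
    intro i
    rw [Fintype.card_subtype]
    by_cases hi : i ∈ S <;> simp [pend, hi] <;> decide
  rw [Finset.sum_congr rfl (fun i _ => this i)]
  have e : ∀ i : ZMod n, (if i ∈ S then (2:ℕ) else 1) = 1 + (if i ∈ S then 1 else 0) := by
    intro i; by_cases hi : i ∈ S <;> simp [hi]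
  rw [Finset.sum_congr rfl (fun i _ => e i), Finset.sum_add_distrib, ← Finset.card_filter,
    Finset.filter_univ_mem, Finset.sum_const, card_univ, ZMod.card, smul_eq_mul, mul_one]

lemma pend_count1 (S : Finset (ZMod n)) :
    (univ.filter fun p : ZMod n × Fin 2 => pend S p.1 p.2 = 1).card + S.card = n := by
  classical
  rw [← Fintype.card_subtype]
  rw [Fintype.card_congr (Equiv.subtypeProdEquivSigmaSubtype (fun i (j : Fin 2) => pend S i j = 1))]
  rw [Fintype.card_sigma]
  have : ∀ i : ZMod n, Fintype.card {j : Fin 2 // pend S i j = 1} = if i ∈ S then 0 else 1 := by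
    intro i
    rw [Fintype.card_subtype]
    by_cases hi : i ∈ S <;> simp [pend, hi] <;> decide
  rw [Finset.sum_congr rfl (fun i _ => this i)]
  have e : ∀ i : ZMod n, (if i ∈ S then (0:ℕ) else 1) + (if i ∈ S then 1 else 0) = 1 := by
    intro i; by_cases hi : i ∈ S <;> simp [hi]
  have h3 := Finset.sum_congr rfl (fun i (_ : i ∈ (univ : Finset (ZMod n))) => e i)
  rw [Finset.sum_add_distrib, ← Finset.card_filter, Finset.filter_univ_mem,
    Finset.sum_const, card_univ, ZMod.card, smul_eq_mul, mul_one] at h3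
  exact h3

lemma polc_count (S : Finset (ZMod n)) (d : Fin 2) :
    (univ.filter fun p : ZMod n × PoleVert => polc S p.1 p.2 = d).card = 4 * n := by
  classical
  rw [← Fintype.card_subtype]
  rw [Fintype.card_congr (Equiv.subtypeProdEquivSigmaSubtype (fun i (q : PoleVert) => polc S i q = d))]
  rw [Fintype.card_sigma]
  have : ∀ i : ZMod n, Fintype.card {q : PoleVert // polc S i q = d} = 4 := by
    intro i
    rw [Fintype.card_subtype]
    by_cases hi : i ∈ S
    · by_cases hi1 : i + 1 ∈ S
      · simp only [polc, hi, hi1, if_true]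
        revert d; decide
      · simp only [polc, hi, hi1, if_true, if_false]
        revert d; decide
    · simp only [polc, hi, if_false]
      revert d; decide
  rw [Finset.sum_congr rfl (fun i _ => this i)]
  rw [Finset.sum_const, card_univ, ZMod.card, smul_eq_mul, mul_comm]

lemma count_split (φ : V → Fin 2) (S : Finset (ZMod n)) (d : Fin 2) :
    (univ.filter fun x : SnarkVert V n => snarkCol φ S x = d).card
      = (univ.filter fun v : V => φ v = d).card
        + ((univ.filter fun p : ZMod n × Fin 2 => pend S p.1 p.2 = d).card
          + (univ.filter fun p : ZMod n × PoleVert => polc S p.1 p.2 = d).card) := by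
  classical
  rw [← Fintype.card_subtype]
  rw [Fintype.card_congr (Equiv.subtypeSum (p := fun x : SnarkVert V n => snarkCol φ S x = d))]
  rw [Fintype.card_sum]
  congr 1
  · rw [Fintype.card_subtype]
    simp only [snarkCol]
    rfl
  · rw [Fintype.card_congr (Equiv.subtypeSum
      (p := fun w : (ZMod n × Fin 2) ⊕ (ZMod n × PoleVert) => snarkCol φ S (Sum.inr w) = d))]
    rw [Fintype.card_sum]
    congr 1
    · rw [Fintype.card_subtype]
      simp only [snarkCol]
      rfl
    · rw [Fintype.card_subtype]
      simp only [snarkCol]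
      rfl

lemma balance (φ : V → Fin 2) (S : Finset (ZMod n))
    (hcard : Fintype.card V + 2 = 2 * n)
    (hn0 : (univ.filter fun v => φ v = 0).card + 1 ≤ n)
    (hScard : S.card + 1 + (univ.filter fun v => φ v = 0).card = n) :
    (univ.filter fun x : SnarkVert V n => snarkCol φ S x = 0).card
      = (univ.filter fun x : SnarkVert V n => snarkCol φ S x = 1).card := by
  classical
  have hsplit : ((univ : Finset V).filter fun v => φ v = 0).card
      + ((univ : Finset V).filter fun v => φ v = 1).card = Fintype.card V := by
    have h1 : ((univ : Finset V).filter fun v => φ v = 1)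
        = ((univ : Finset V).filter fun v => ¬ φ v = 0) := by
      apply Finset.filter_congr
      intro v _
      constructor
      · intro hv; rw [hv]; decide
      · intro hv
        have : ∀ a : Fin 2, ¬ a = 0 → a = 1 := by decide
        exact this _ hv
    rw [h1, Finset.card_filter_add_card_filter_not, card_univ]
  rw [count_split, count_split, pend_count0, polc_count, polc_count]
  have hp1 := pend_count1 (n := n) S
  omega


lemma fin2_cases : ∀ a : Fin 2, a = 0 ∨ a = 1 := by decide

lemma cFF : chiFF L1 = 0 ∧ chiFF L2 = 1 ∧ chiFF R1 = 0 ∧ chiFF R2 = 1 := by decide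
lemma cTT : chiTT L1 = 1 ∧ chiTT L2 = 1 ∧ chiTT R1 = 1 ∧ chiTT R2 = 1 := by decide
lemma cTF : chiTF L1 = 1 ∧ chiTF L2 = 0 ∧ chiTF R1 = 0 ∧ chiTF R2 = 1 := by decide

variable (T : SimpleGraph V) (ℓ : ZMod n → V)

lemma partner_spec (φ : V → Fin 2) (S : Finset (ZMod n))
    (hinj : Function.Injective ℓ)
    (hprop : ∀ u v, T.Adj u v → φ u ≠ φ v)
    (hS : ∀ i ∈ S, φ (ℓ i) = 1) :
    ∀ x y, (treelikeSnark n T ℓ).Adj x y → snarkCol φ S x = snarkCol φ S y →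
      y = partner ℓ φ S x := by
  have pend_tree : ∀ (i : ZMod n) (j : Fin 2), φ (ℓ i) = pend S i j →
      Sum.inr (Sum.inl (i, j)) = partner ℓ φ S (Sum.inl (ℓ i) : SnarkVert V n) := by
    intro i j hc
    have hex : ∃ i', ℓ i' = ℓ i := ⟨i, rfl⟩
    have hch : hex.choose = i := hinj hex.choose_spec
    simp only [partner]
    rw [dif_pos hex, hch]
    by_cases hi : i ∈ S
    · -- φ (ℓ i) = 1, pend S i j = 1 impossible for j = 0 (val 0) and j=1 (0); so contradiction
      have h1 : φ (ℓ i) = 1 := hS i hi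
      rcases fin2_cases j with rfl | rfl
      · simp [pend, hi, h1] at hc
      · simp [pend, hi, h1] at hc
    · rcases fin2_cases j with rfl | rfl
      · -- pend = 1, so φ (ℓ i) = 1
        simp only [pend, if_pos rfl, if_neg hi] at hc
        simp [hc]
      · simp only [pend, if_neg (by decide : ¬(1 : Fin 2) = 0)] at hc
        simp [hc]
  have tree_pend : ∀ (i : ZMod n) (j : Fin 2), pend S i j = φ (ℓ i) →
      (Sum.inl (ℓ i) : SnarkVert V n) = partner ℓ φ S (Sum.inr (Sum.inl (i, j))) := by
    intro i j hc
    by_cases hi : i ∈ S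
    · have h1 : φ (ℓ i) = 1 := hS i hi
      rcases fin2_cases j with rfl | rfl
      · simp [pend, hi, h1] at hc
      · simp [pend, hi, h1] at hc
    · rcases fin2_cases j with rfl | rfl
      · simp [partner, hi]
      · simp [partner, hi]
  have pole_pole : ∀ (i : ZMod n) (p q : PoleVert), Disjoint p.1 q.1 →
      polc S i p = polc S i q →
      (Sum.inr (Sum.inr (i, q)) : SnarkVert V n) = partner ℓ φ S (Sum.inr (Sum.inr (i, p))) := by
    intro i p q hd hc
    by_cases hi : i ∈ S
    · by_cases hi1 : i + 1 ∈ S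
      · simp only [polc, if_pos hi, if_pos hi1] at hc
        have hq := chiTT_pair p q hd hc
        simp [partner, hi, hi1, hq]
      · simp only [polc, if_pos hi, if_neg hi1] at hc
        obtain ⟨hq, hp⟩ := chiTF_pair p q hd hc
        simp [partner, hi, hi1, hq, hp]
    · simp only [polc, if_neg hi] at hc
      obtain ⟨hq, hp⟩ := chiFF_pair p q hd hc
      have : ¬ (p = R1 ∧ i + 1 ∈ S) := fun hcon => hp hcon.1
      simp [partner, hi, this, hq]
  intro x y hadj hc
  rw [treelikeSnark, SimpleGraph.fromRel_adj] at hadj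
  obtain ⟨hne, hrel | hrel⟩ := hadj
  · rcases hrel with ⟨u, v, huv, rfl, rfl⟩ | ⟨i, j, rfl, rfl⟩ |
      ⟨i, p, q, hd, rfl, rfl⟩ | ⟨i, hD | hD | hD | hD⟩
    · exact absurd hc (hprop u v huv)
    · exact pend_tree i j hc
    · exact pole_pole i p q hd hc
    all_goals obtain ⟨rfl, rfl⟩ := hD
    · -- pendant (i,0) ~ pole (i, L1) : never monochromatic
      exfalso
      by_cases hi : i ∈ S
      · by_cases hi1 : i + 1 ∈ S
        · simp [snarkCol, pend, polc, hi, hi1, cTT.1] at hc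
        · simp [snarkCol, pend, polc, hi, hi1, cTF.1] at hc
      · simp [snarkCol, pend, polc, hi, cFF.1] at hc
    · -- pendant (i,1) ~ pole (i, L2): mono iff i ∈ S, i+1 ∉ S
      by_cases hi : i ∈ S
      · by_cases hi1 : i + 1 ∈ S
        · exfalso; simp [snarkCol, pend, polc, hi, hi1, cTT.2.1] at hc
        · simp [partner, hi]
      · exfalso; simp [snarkCol, pend, polc, hi, cFF.2.1] at hc
    · -- pendant (i+1,0) ~ pole (i, R1): mono iff i ∉ S, i+1 ∈ S
      by_cases hi : i ∈ S
      · by_cases hi1 : i + 1 ∈ S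
        · exfalso; simp [snarkCol, pend, polc, hi, hi1, cTT.2.2.1] at hc
        · exfalso; simp [snarkCol, pend, polc, hi, hi1, cTF.2.2.1] at hc
      · by_cases hi1 : i + 1 ∈ S
        · simp only [partner, if_pos rfl, if_pos hi1]
          rw [add_sub_cancel_right]
          simp
        · exfalso; simp [snarkCol, pend, polc, hi, hi1, cFF.2.2.1] at hc
    · -- pendant (i+1,1) ~ pole (i, R2): never
      exfalso
      by_cases hi : i ∈ S
      · by_cases hi1 : i + 1 ∈ S
        · simp [snarkCol, pend, polc, hi, hi1, cTT.2.2.2] at hc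
        · simp [snarkCol, pend, polc, hi, hi1, cTF.2.2.2] at hc
      · simp [snarkCol, pend, polc, hi, cFF.2.2.2] at hc
  · rcases hrel with ⟨u, v, huv, rfl, rfl⟩ | ⟨i, j, rfl, rfl⟩ |
      ⟨i, p, q, hd, rfl, rfl⟩ | ⟨i, hD | hD | hD | hD⟩
    · exact absurd hc (hprop v u huv.symm)
    · exact tree_pend i j hc
    · exact pole_pole i q p hd.symm hc
    all_goals obtain ⟨rfl, rfl⟩ := hD
    · exfalso
      by_cases hi : i ∈ S
      · by_cases hi1 : i + 1 ∈ S
        · simp [snarkCol, pend, polc, hi, hi1, cTT.1] at hc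
        · simp [snarkCol, pend, polc, hi, hi1, cTF.1] at hc
      · simp [snarkCol, pend, polc, hi, cFF.1] at hc
    · by_cases hi : i ∈ S
      · by_cases hi1 : i + 1 ∈ S
        · exfalso; simp [snarkCol, pend, polc, hi, hi1, cTT.2.1] at hc
        · simp [partner, hi, hi1]
      · exfalso; simp [snarkCol, pend, polc, hi, cFF.2.1] at hc
    · by_cases hi : i ∈ S
      · by_cases hi1 : i + 1 ∈ S
        · exfalso; simp [snarkCol, pend, polc, hi, hi1, cTT.2.2.1] at hc
        · exfalso; simp [snarkCol, pend, polc, hi, hi1, cTF.2.2.1] at hc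
      · by_cases hi1 : i + 1 ∈ S
        · simp [partner, hi, hi1]
        · exfalso; simp [snarkCol, pend, polc, hi, hi1, cFF.2.2.1] at hc
    · exfalso
      by_cases hi : i ∈ S
      · by_cases hi1 : i + 1 ∈ S
        · simp [snarkCol, pend, polc, hi, hi1, cTT.2.2.2] at hc
        · simp [snarkCol, pend, polc, hi, hi1, cTF.2.2.2] at hc
      · simp [snarkCol, pend, polc, hi, cFF.2.2.2] at hc

end TLS

theorem treelike_snark_has_two_bisection {V : Type*} [Fintype V] (n : ℕ) [NeZero n]
    (T : SimpleGraph V) (ℓ : ZMod n → V) (h : IsTreelikeStructure n T ℓ) :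
    ∃ c : SnarkVert V n → Fin 2, TwoBisection (treelikeSnark n T ℓ) c := by
  classical
  open Finset TLS in
  obtain ⟨φ0, hφ0⟩ := TLS.exists_proper_coloring h.tree
  have hcard : Fintype.card V + 2 = 2 * n :=
    TLS.card_of_cubic_tree n ℓ h.tree h.cubic h.inj h.isLeaf h.surjOnLeaves
  have hsplitV : ∀ ψ : V → Fin 2,
      ((univ : Finset V).filter fun v => ψ v = 0).card
        + ((univ : Finset V).filter fun v => ψ v = 1).card = Fintype.card V := by
    intro ψ
    have h1 : ((univ : Finset V).filter fun v => ψ v = 1)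
        = ((univ : Finset V).filter fun v => ¬ ψ v = 0) := by
      apply Finset.filter_congr
      intro v _
      have : ∀ a : Fin 2, (a = 1 ↔ ¬ a = 0) := by decide
      exact this _
    rw [h1, Finset.card_filter_add_card_filter_not, card_univ]
  obtain ⟨φ, hφ, hn0⟩ : ∃ φ : V → Fin 2, (∀ u v, T.Adj u v → φ u ≠ φ v) ∧
      ((univ : Finset V).filter fun v => φ v = 0).card + 1 ≤ n := by
    by_cases hle : ((univ : Finset V).filter fun v => φ0 v = 0).card + 1 ≤ n
    · exact ⟨φ0, hφ0, hle⟩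
    · refine ⟨fun v => φ0 v + 1, fun u v huv hcon => hφ0 u v huv (by
        have : ∀ a b : Fin 2, a + 1 = b + 1 → a = b := by decide
        exact this _ _ hcon), ?_⟩
      have he : ((univ : Finset V).filter fun v => φ0 v + 1 = 0)
          = ((univ : Finset V).filter fun v => φ0 v = 1) := by
        apply Finset.filter_congr
        intro v _
        have : ∀ a : Fin 2, (a + 1 = 0 ↔ a = 1) := by decide
        exact this _
      rw [he]
      have := hsplitV φ0
      omega
  have hsub : n - 1 - ((univ : Finset V).filter fun v => φ v = 0).card
      ≤ ((univ : Finset (ZMod n)).filter fun i => φ (ℓ i) = 1).card := by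
    have himg : ((univ : Finset (ZMod n)).filter fun i => φ (ℓ i) = 0).card
        ≤ ((univ : Finset V).filter fun v => φ v = 0).card := by
      have hsubim : ((univ : Finset (ZMod n)).filter fun i => φ (ℓ i) = 0).image ℓ
          ⊆ (univ : Finset V).filter fun v => φ v = 0 := by
        intro v hv
        obtain ⟨i, hi, rfl⟩ := Finset.mem_image.mp hv
        exact Finset.mem_filter.mpr ⟨Finset.mem_univ _, (Finset.mem_filter.mp hi).2⟩
      calc ((univ : Finset (ZMod n)).filter fun i => φ (ℓ i) = 0).card
          = (((univ : Finset (ZMod n)).filter fun i => φ (ℓ i) = 0).image ℓ).card :=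
            (Finset.card_image_of_injective _ h.inj).symm
        _ ≤ _ := Finset.card_le_card hsubim
    have hnn : ((univ : Finset (ZMod n)).filter fun i => φ (ℓ i) = 0).card
        + ((univ : Finset (ZMod n)).filter fun i => φ (ℓ i) = 1).card = n := by
      have h1 : ((univ : Finset (ZMod n)).filter fun i => φ (ℓ i) = 1)
          = ((univ : Finset (ZMod n)).filter fun i => ¬ φ (ℓ i) = 0) := by
        apply Finset.filter_congr
        intro i _
        have : ∀ a : Fin 2, (a = 1 ↔ ¬ a = 0) := by decide
        exact this _
      rw [h1, Finset.card_filter_add_card_filter_not, card_univ, ZMod.card]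
    omega
  obtain ⟨S, hSsub, hScard⟩ := Finset.exists_subset_card_eq hsub
  have hS1 : ∀ i ∈ S, φ (ℓ i) = 1 := fun i hi => (Finset.mem_filter.mp (hSsub hi)).2
  refine ⟨TLS.snarkCol φ S, ?_, ?_⟩
  · exact TLS.balance φ S hcard hn0 (by have := hsplitV φ; omega)
  · intro d K
    apply TLS.comp_le_two
    intro x y z hx hy hz hxy hxz
    have hcxy : TLS.snarkCol φ S x = TLS.snarkCol φ S y := by
      rw [Set.mem_setOf_eq] at hx hy
      rw [hx, hy]
    have hcxz : TLS.snarkCol φ S x = TLS.snarkCol φ S z := by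
      rw [Set.mem_setOf_eq] at hx hz
      rw [hx, hz]
    rw [TLS.partner_spec T ℓ φ S h.inj hφ hS1 x y hxy hcxy,
      TLS.partner_spec T ℓ φ S h.inj hφ hS1 x z hxz hcxz]
end

section
/- The smallest treelike snark, namely the 34-vertex treelike snark obtained from the Halin graph whose tree T is the star K_{1,3} (one vertex of degree 3 and three leaves) and whose circuit K is the triangle on the three leaves (so the construction uses three Petersen 4-poles), admits a 2-bisection. -/
/-- The star `K_{1,3}`: the tree on `Fin 4` whose centre is `3` and whose leaves are
`0, 1, 2` (one vertex of degree 3 and three leaves, no vertex of degree 2). -/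
def starTree : SimpleGraph (Fin 4) := SimpleGraph.fromRel (fun _ b => b = 3)

open Fin.NatCast in
/-- The enumeration of the three leaves `0, 1, 2` of the star, giving the triangle
circuit `K` on the leaves of the Halin graph. -/
def starLeaves : ZMod 3 → Fin 4 := fun i => (i.val : Fin 4)

/-- The smallest treelike snark: the 34-vertex treelike snark obtained from the Halin graph
whose tree is the star `K_{1,3}` and whose circuit is the triangle on its three leaves
(so three Petersen 4-poles are used). -/
def smallestTreelikeSnark : SimpleGraph (SnarkVert (Fin 4) 3) :=
  treelikeSnark 3 starTree starLeaves


section Proof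

set_option synthInstance.maxHeartbeats 2000000
set_option synthInstance.maxSize 4096
set_option maxHeartbeats 4000000

open SimpleGraph

/-- Auxiliary: if every edge of `G` goes from `x` to `p x`, with `p` an involution,
then every connected component has at most two vertices. -/
lemma comp_supp_le_two {V : Type*} (G : SimpleGraph V) (p : V → V)
    (hinv : ∀ x, p (p x) = x) (hadj : ∀ x y, G.Adj x y → y = p x) :
    ∀ K : G.ConnectedComponent, K.supp.ncard ≤ 2 := by
  have key : ∀ v w : V, G.Reachable v w → w = v ∨ w = p v := by
    intro v w hr
    obtain ⟨walk⟩ := hr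
    induction walk with
    | nil => exact Or.inl rfl
    | @cons a b c h q ih =>
      have hb : b = p a := hadj _ _ h
      rcases ih with h1 | h1
      · right; rw [h1, hb]
      · left; rw [h1, hb, hinv]
  intro K
  obtain ⟨v, rfl⟩ := K.exists_rep
  have hsub : (SimpleGraph.connectedComponentMk G v).supp ⊆ {v, p v} := by
    intro w hw
    have hr : G.Reachable v w := by
      have := (SimpleGraph.ConnectedComponent.eq (G := G) (v := w) (w := v)).mp hw
      exact this.symm
    rcases key v w hr with h1 | h1
    · exact Or.inl h1
    · exact Or.inr h1
  calc (SimpleGraph.connectedComponentMk G v).supp.ncard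
      ≤ ({v, p v} : Set V).ncard := Set.ncard_le_ncard hsub (Set.toFinite _)
    _ ≤ ({p v} : Set V).ncard + 1 := Set.ncard_insert_le _ _
    _ ≤ 2 := by rw [Set.ncard_singleton]

/-- The black colour class of the 2-bisection. -/
def blackList : List (SnarkVert (Fin 4) 3) := [
  Sum.inl 0,
  Sum.inl 3,
  Sum.inr (Sum.inl (1, 1)),
  Sum.inr (Sum.inl (2, 1)),
  Sum.inr (Sum.inr (0, ⟨{0,2}, by decide⟩)),
  Sum.inr (Sum.inr (0, ⟨{0,3}, by decide⟩)),
  Sum.inr (Sum.inr (0, ⟨{0,4}, by decide⟩)),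
  Sum.inr (Sum.inr (0, ⟨{2,4}, by decide⟩)),
  Sum.inr (Sum.inr (0, ⟨{3,4}, by decide⟩)),
  Sum.inr (Sum.inr (1, ⟨{0,4}, by decide⟩)),
  Sum.inr (Sum.inr (1, ⟨{1,4}, by decide⟩)),
  Sum.inr (Sum.inr (1, ⟨{2,4}, by decide⟩)),
  Sum.inr (Sum.inr (1, ⟨{3,4}, by decide⟩)),
  Sum.inr (Sum.inr (2, ⟨{1,2}, by decide⟩)),
  Sum.inr (Sum.inr (2, ⟨{1,3}, by decide⟩)),
  Sum.inr (Sum.inr (2, ⟨{1,4}, by decide⟩)),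
  Sum.inr (Sum.inr (2, ⟨{2,4}, by decide⟩))]

/-- The colouring. -/
def myCol : SnarkVert (Fin 4) 3 → Fin 2 := fun v =>
  if blackList.any (fun w => decide (w = v)) then (0 : Fin 2) else 1

/-- Pairing of vertices lying in a common monochromatic edge. -/
def pairList : List (SnarkVert (Fin 4) 3 × SnarkVert (Fin 4) 3) := [
  (Sum.inl 0, Sum.inl 3),
  (Sum.inl 1, Sum.inr (Sum.inl (1, 0))),
  (Sum.inl 2, Sum.inr (Sum.inl (2, 0))),
  (Sum.inl 3, Sum.inl 0),
  (Sum.inr (Sum.inl (0, 0)), Sum.inr (Sum.inr (2, ⟨{0,4}, by decide⟩))),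
  (Sum.inr (Sum.inl (1, 0)), Sum.inl 1),
  (Sum.inr (Sum.inl (1, 1)), Sum.inr (Sum.inr (1, ⟨{3,4}, by decide⟩))),
  (Sum.inr (Sum.inl (2, 0)), Sum.inl 2),
  (Sum.inr (Sum.inl (2, 1)), Sum.inr (Sum.inr (1, ⟨{1,4}, by decide⟩))),
  (Sum.inr (Sum.inr (0, ⟨{0,2}, by decide⟩)), Sum.inr (Sum.inr (0, ⟨{3,4}, by decide⟩))),
  (Sum.inr (Sum.inr (0, ⟨{0,3}, by decide⟩)), Sum.inr (Sum.inr (0, ⟨{2,4}, by decide⟩))),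
  (Sum.inr (Sum.inr (0, ⟨{2,4}, by decide⟩)), Sum.inr (Sum.inr (0, ⟨{0,3}, by decide⟩))),
  (Sum.inr (Sum.inr (0, ⟨{3,4}, by decide⟩)), Sum.inr (Sum.inr (0, ⟨{0,2}, by decide⟩))),
  (Sum.inr (Sum.inr (1, ⟨{0,2}, by decide⟩)), Sum.inr (Sum.inr (1, ⟨{1,3}, by decide⟩))),
  (Sum.inr (Sum.inr (1, ⟨{0,3}, by decide⟩)), Sum.inr (Sum.inr (1, ⟨{1,2}, by decide⟩))),
  (Sum.inr (Sum.inr (1, ⟨{1,2}, by decide⟩)), Sum.inr (Sum.inr (1, ⟨{0,3}, by decide⟩))),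
  (Sum.inr (Sum.inr (1, ⟨{1,3}, by decide⟩)), Sum.inr (Sum.inr (1, ⟨{0,2}, by decide⟩))),
  (Sum.inr (Sum.inr (1, ⟨{1,4}, by decide⟩)), Sum.inr (Sum.inl (2, 1))),
  (Sum.inr (Sum.inr (1, ⟨{3,4}, by decide⟩)), Sum.inr (Sum.inl (1, 1))),
  (Sum.inr (Sum.inr (2, ⟨{0,2}, by decide⟩)), Sum.inr (Sum.inr (2, ⟨{3,4}, by decide⟩))),
  (Sum.inr (Sum.inr (2, ⟨{0,4}, by decide⟩)), Sum.inr (Sum.inl (0, 0))),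
  (Sum.inr (Sum.inr (2, ⟨{1,3}, by decide⟩)), Sum.inr (Sum.inr (2, ⟨{2,4}, by decide⟩))),
  (Sum.inr (Sum.inr (2, ⟨{2,4}, by decide⟩)), Sum.inr (Sum.inr (2, ⟨{1,3}, by decide⟩))),
  (Sum.inr (Sum.inr (2, ⟨{3,4}, by decide⟩)), Sum.inr (Sum.inr (2, ⟨{0,2}, by decide⟩)))]

instance : DecidableRel starTree.Adj := fun a b =>
  decidable_of_iff _ (SimpleGraph.fromRel_adj _ a b).symm

instance : DecidableRel smallestTreelikeSnark.Adj := fun a b =>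
  decidable_of_iff _ (SimpleGraph.fromRel_adj _ a b).symm

/-- The partner function. -/
def myP : SnarkVert (Fin 4) 3 → SnarkVert (Fin 4) 3 := fun v =>
  (((pairList.find? (fun q => decide (q.1 = v))).map Prod.snd).getD v)

lemma myP_col : ∀ v, myCol (myP v) = myCol v := by decide

lemma myP_invol : ∀ v, myP (myP v) = v := by decide

lemma D1 : ∀ u v : Fin 4, starTree.Adj u v →
    myCol (Sum.inl u) = myCol (Sum.inl v) →
    (Sum.inl v : SnarkVert (Fin 4) 3) = myP (Sum.inl u) ∧
      (Sum.inl u : SnarkVert (Fin 4) 3) = myP (Sum.inl v) := by decide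

lemma D2 : ∀ (i : ZMod 3) (j : Fin 2),
    myCol (Sum.inl (starLeaves i)) = myCol (Sum.inr (Sum.inl (i, j))) →
    (Sum.inr (Sum.inl (i, j)) : SnarkVert (Fin 4) 3) = myP (Sum.inl (starLeaves i)) ∧
      (Sum.inl (starLeaves i) : SnarkVert (Fin 4) 3) = myP (Sum.inr (Sum.inl (i, j))) := by decide

lemma D3 : ∀ (i : ZMod 3) (p q : PoleVert), Disjoint p.1 q.1 →
    myCol (Sum.inr (Sum.inr (i, p))) = myCol (Sum.inr (Sum.inr (i, q))) →
    (Sum.inr (Sum.inr (i, q)) : SnarkVert (Fin 4) 3) = myP (Sum.inr (Sum.inr (i, p))) ∧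
      (Sum.inr (Sum.inr (i, p)) : SnarkVert (Fin 4) 3) = myP (Sum.inr (Sum.inr (i, q))) := by
  decide

lemma D4 : ∀ (i : ZMod 3) (j : Fin 2) (x : PoleVert),
    ((j = 0 ∧ x = L1) ∨ (j = 1 ∧ x = L2)) →
    myCol (Sum.inr (Sum.inl (i, j))) = myCol (Sum.inr (Sum.inr (i, x))) →
    (Sum.inr (Sum.inr (i, x)) : SnarkVert (Fin 4) 3) = myP (Sum.inr (Sum.inl (i, j))) ∧
      (Sum.inr (Sum.inl (i, j)) : SnarkVert (Fin 4) 3) = myP (Sum.inr (Sum.inr (i, x))) := by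
  decide

lemma D5 : ∀ (i : ZMod 3) (j : Fin 2) (x : PoleVert),
    ((j = 0 ∧ x = R1) ∨ (j = 1 ∧ x = R2)) →
    myCol (Sum.inr (Sum.inl (i + 1, j))) = myCol (Sum.inr (Sum.inr (i, x))) →
    (Sum.inr (Sum.inr (i, x)) : SnarkVert (Fin 4) 3) = myP (Sum.inr (Sum.inl (i + 1, j))) ∧
      (Sum.inr (Sum.inl (i + 1, j)) : SnarkVert (Fin 4) 3) = myP (Sum.inr (Sum.inr (i, x))) := by
  decide

lemma myP_adj : ∀ v w, smallestTreelikeSnark.Adj v w → myCol v = myCol w → w = myP v := by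
  have hR : ∀ a b : SnarkVert (Fin 4) 3,
      ((∃ u v : Fin 4, starTree.Adj u v ∧ a = Sum.inl u ∧ b = Sum.inl v) ∨
       (∃ (i : ZMod 3) (j : Fin 2), a = Sum.inl (starLeaves i) ∧ b = Sum.inr (Sum.inl (i, j))) ∨
       (∃ (i : ZMod 3) (p q : PoleVert), Disjoint p.1 q.1 ∧
          a = Sum.inr (Sum.inr (i, p)) ∧ b = Sum.inr (Sum.inr (i, q))) ∨
       (∃ i : ZMod 3,
         (a = Sum.inr (Sum.inl (i, 0)) ∧ b = Sum.inr (Sum.inr (i, L1))) ∨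
         (a = Sum.inr (Sum.inl (i, 1)) ∧ b = Sum.inr (Sum.inr (i, L2))) ∨
         (a = Sum.inr (Sum.inl (i + 1, 0)) ∧ b = Sum.inr (Sum.inr (i, R1))) ∨
         (a = Sum.inr (Sum.inl (i + 1, 1)) ∧ b = Sum.inr (Sum.inr (i, R2))))) →
      myCol a = myCol b → b = myP a ∧ a = myP b := by
    rintro a b (⟨u, v, h, rfl, rfl⟩ | ⟨i, j, rfl, rfl⟩ | ⟨i, p, q, hd, rfl, rfl⟩ |
      ⟨i, (⟨rfl, rfl⟩ | ⟨rfl, rfl⟩ | ⟨rfl, rfl⟩ | ⟨rfl, rfl⟩)⟩) hc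
    · exact D1 u v h hc
    · exact D2 i j hc
    · exact D3 i p q hd hc
    · exact D4 i 0 L1 (Or.inl ⟨rfl, rfl⟩) hc
    · exact D4 i 1 L2 (Or.inr ⟨rfl, rfl⟩) hc
    · exact D5 i 0 R1 (Or.inl ⟨rfl, rfl⟩) hc
    · exact D5 i 1 R2 (Or.inr ⟨rfl, rfl⟩) hc
  intro v w hadj hc
  rw [smallestTreelikeSnark, treelikeSnark, SimpleGraph.fromRel_adj] at hadj
  rcases hadj with ⟨-, h | h⟩
  · exact (hR v w h hc).1
  · exact (hR w v h hc.symm).2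

lemma myCol_card :
    (Finset.univ.filter fun v => myCol v = 0).card =
      (Finset.univ.filter fun v => myCol v = 1).card := by decide

end Proof

/-- The smallest treelike snark (34 vertices) admits a 2-bisection. -/
theorem smallest_treelike_snark_has_two_bisection :
    ∃ c : SnarkVert (Fin 4) 3 → Fin 2, TwoBisection smallestTreelikeSnark c := by
  refine ⟨myCol, myCol_card, ?_⟩
  intro i K
  have hmem : ∀ x : {v | myCol v = i}, myP x.1 ∈ {v | myCol v = i} := by
    intro x
    have hx : myCol x.1 = i := x.2
    show myCol (myP x.1) = i
    rw [myP_col, hx]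
  refine comp_supp_le_two _ (fun x => ⟨myP x.1, hmem x⟩)
    (fun x => Subtype.ext (myP_invol x.1)) ?_ K
  · intro x y h
    have hadj : smallestTreelikeSnark.Adj x.1 y.1 := h
    have hc : myCol x.1 = myCol y.1 := by
      have hx : myCol x.1 = i := x.2
      have hy : myCol y.1 = i := y.2
      rw [hx, hy]
    exact Subtype.ext (myP_adj x.1 y.1 hadj hc)
end

section
/- Let P be the Petersen graph, let s and t be adjacent vertices of P, and let P' = P − {s,t}. For every vertex w among the four degree-2 vertices of P', there exists a 2-colouring of V(P') such that: the class of colour 1 has exactly 5 vertices and the class of colour 2 has exactly 3 vertices; every monochromatic component has at most 2 vertices; and among the four degree-2 vertices of P', the vertex w receives colour 2 while the other three receive colour 1 (the 'unbalanced' colourings of the Petersen 4-pole). -/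
/-- Vertices of the Petersen graph: 2-element subsets of {1,...,5} (modelled as `Fin 5`). -/
abbrev PetersenVert : Type := {p : Finset (Fin 5) // p.card = 2}

/-- The Petersen graph as the Kneser graph K(5,2): two 2-subsets are adjacent iff disjoint. -/
def Petersen : SimpleGraph PetersenVert where
  Adj a b := Disjoint a.1 b.1
  symm := ⟨fun _ _ h => Disjoint.symm h⟩
  loopless := by
    refine ⟨?_⟩
    intro a h
    have ha : a.1 = ∅ := by simpa using disjoint_self.mp h
    have := a.2
    rw [ha] at this
    simp at this

/-- The vertex set of `P' = P − {s, t}`. -/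
def avoidSet (s t : PetersenVert) : Set PetersenVert := {v | v ≠ s ∧ v ≠ t}

/-- `P' = P − {s, t}`: the subgraph of the Petersen graph induced on the vertices
different from `s` and `t`. -/
def Pminus (s t : PetersenVert) : SimpleGraph (avoidSet s t) :=
  Petersen.induce (avoidSet s t)

/-- `v` is one of the (four) vertices of degree 2 of `P' = P − {s, t}`. -/
def IsDeg2 (s t : PetersenVert) (v : avoidSet s t) : Prop :=
  ((Pminus s t).neighborSet v).ncard = 2

instance instDecAvoid (s t : PetersenVert) : DecidablePred (· ∈ avoidSet s t) :=
  fun v => inferInstanceAs (Decidable (v ≠ s ∧ v ≠ t))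

instance instFintypeAvoid (s t : PetersenVert) : Fintype (avoidSet s t) :=
  inferInstanceAs (Fintype {v // v ∈ avoidSet s t})

instance instDecAdjPminus (s t : PetersenVert) : DecidableRel (Pminus s t).Adj :=
  fun a b => inferInstanceAs (Decidable (Disjoint a.1.1 b.1.1))

lemma walk_aux {V : Type*} {G : SimpleGraph V} (h : ∀ v, {u | G.Adj v u}.Subsingleton) :
    ∀ {a b : V}, G.Walk a b → b = a ∨ G.Adj a b := by
  intro a b p
  induction p with
  | nil => exact Or.inl rfl
  | @cons x y z hxy p ih =>
    rcases ih with rfl | hyz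
    · exact Or.inr hxy
    · exact Or.inl (h y hyz hxy.symm)

lemma supp_ncard_le_two {V : Type*} {G : SimpleGraph V}
    (h : ∀ v, {u | G.Adj v u}.Subsingleton) (K : G.ConnectedComponent) :
    K.supp.ncard ≤ 2 := by
  induction K using SimpleGraph.ConnectedComponent.ind with
  | _ v =>
    have hsub : (G.connectedComponentMk v).supp ⊆ insert v {u | G.Adj v u} := by
      intro u hu
      have hu' : G.connectedComponentMk u = G.connectedComponentMk v := hu
      have hr : G.Reachable v u := (SimpleGraph.ConnectedComponent.eq.mp hu').symm
      rcases walk_aux h hr.some with rfl | hadj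
      · exact Set.mem_insert _ _
      · exact Set.mem_insert_of_mem _ hadj
    have hfin : (insert v {u | G.Adj v u}).Finite := ((h v).finite).insert v
    refine le_trans (Set.ncard_le_ncard hsub hfin) ?_
    refine le_trans (Set.ncard_insert_le _ _) ?_
    have h1 : {u | G.Adj v u}.ncard ≤ 1 := by
      rcases (h v).eq_empty_or_singleton with he | ⟨x, hx⟩
      · simp [he]
      · simp [hx]
    omega

lemma isDeg2_iff (s t : PetersenVert) (v : avoidSet s t) :
    IsDeg2 s t v ↔
      (Finset.univ.filter fun u : avoidSet s t => Disjoint v.1.1 u.1.1).card = 2 := by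
  unfold IsDeg2
  have hset : (Pminus s t).neighborSet v = {u : avoidSet s t | Disjoint v.1.1 u.1.1} := rfl
  rw [hset, Set.ncard_eq_toFinset_card', Set.toFinset_setOf]

set_option maxHeartbeats 4000000 in
lemma key : ∀ s t : PetersenVert, Disjoint s.1 t.1 → ∀ w : avoidSet s t,
    (Finset.univ.filter fun u : avoidSet s t => Disjoint w.1.1 u.1.1).card = 2 →
    ((Finset.univ.filter fun v : avoidSet s t =>
        (if w.1.1 ∩ (s.1 ∪ t.1) ⊆ v.1.1 then (1:Fin 2) else 0) = 0).card = 5) ∧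
    ((Finset.univ.filter fun v : avoidSet s t =>
        (if w.1.1 ∩ (s.1 ∪ t.1) ⊆ v.1.1 then (1:Fin 2) else 0) = 1).card = 3) ∧
    (∀ v : avoidSet s t,
      (Finset.univ.filter fun u : avoidSet s t => Disjoint v.1.1 u.1.1 ∧
        ((if w.1.1 ∩ (s.1 ∪ t.1) ⊆ u.1.1 then (1:Fin 2) else 0) =
         (if w.1.1 ∩ (s.1 ∪ t.1) ⊆ v.1.1 then (1:Fin 2) else 0))).card ≤ 1) ∧
    (∀ v : avoidSet s t,
      (Finset.univ.filter fun u : avoidSet s t => Disjoint v.1.1 u.1.1).card = 2 →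
        ((if w.1.1 ∩ (s.1 ∪ t.1) ⊆ v.1.1 then (1:Fin 2) else 0) = 1 ↔ v = w)) := by
  decide

/-- The "unbalanced" colourings of the Petersen 4-pole: for adjacent vertices `s, t` of
the Petersen graph, `P' = P − {s,t}`, and any vertex `w` among the four degree-2 vertices
of `P'`, there is a 2-colouring of `V(P')` (colour 1 is the value `0 : Fin 2`, colour 2
the value `1`) whose colour-1 class has exactly 5 vertices and colour-2 class exactly 3
vertices, all monochromatic components have at most 2 vertices, and among the four
degree-2 vertices `w` gets colour 2 while the other three get colour 1. -/
theorem unbalanced_colouring_exists (s t : PetersenVert) (hst : Petersen.Adj s t)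
    (w : avoidSet s t) (hw : IsDeg2 s t w) :
    ∃ c : avoidSet s t → Fin 2,
      {v : avoidSet s t | c v = 0}.ncard = 5 ∧
      {v : avoidSet s t | c v = 1}.ncard = 3 ∧
      (∀ i : Fin 2,
        ∀ K : ((Pminus s t).induce {v | c v = i}).ConnectedComponent, K.supp.ncard ≤ 2) ∧
      (∀ v : avoidSet s t, IsDeg2 s t v → (c v = 1 ↔ v = w)) := by
  have hst' : Disjoint s.1 t.1 := hst
  have hw' := (isDeg2_iff s t w).mp hw
  obtain ⟨h5, h3, hdeg, hiff⟩ := key s t hst' w hw'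
  refine ⟨fun v => if w.1.1 ∩ (s.1 ∪ t.1) ⊆ v.1.1 then 1 else 0, ?_, ?_, ?_, ?_⟩
  · rw [Set.ncard_eq_toFinset_card', Set.toFinset_setOf]; exact h5
  · rw [Set.ncard_eq_toFinset_card', Set.toFinset_setOf]; exact h3
  · intro i K
    refine supp_ncard_le_two ?_ K
    intro v u₁ hu₁ u₂ hu₂
    have hadj₁ : Disjoint v.1.1.1 u₁.1.1.1 := hu₁
    have hadj₂ : Disjoint v.1.1.1 u₂.1.1.1 := hu₂
    have hc₁ : (if w.1.1 ∩ (s.1 ∪ t.1) ⊆ u₁.1.1.1 then (1:Fin 2) else 0) =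
        (if w.1.1 ∩ (s.1 ∪ t.1) ⊆ v.1.1.1 then (1:Fin 2) else 0) := u₁.2.trans v.2.symm
    have hc₂ : (if w.1.1 ∩ (s.1 ∪ t.1) ⊆ u₂.1.1.1 then (1:Fin 2) else 0) =
        (if w.1.1 ∩ (s.1 ∪ t.1) ⊆ v.1.1.1 then (1:Fin 2) else 0) := u₂.2.trans v.2.symm
    have := Finset.card_le_one.mp (hdeg v.1)
    have heq : u₁.1 = u₂.1 :=
      this u₁.1 (Finset.mem_filter.mpr ⟨Finset.mem_univ _, hadj₁, hc₁⟩)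
        u₂.1 (Finset.mem_filter.mpr ⟨Finset.mem_univ _, hadj₂, hc₂⟩)
    exact Subtype.ext heq
  · intro v hv
    exact hiff v ((isDeg2_iff s t v).mp hv)
end
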